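/- Let X be a completely regular Hausdorff P-space, i.e., every countable intersection of open subsets of X is open. Then X is paracompact if and only if X is ultraparacompact. -/

import Mathlib

/-- A partition of the space `X` into (nonempty, pairwise disjoint) clopen sets. -/
def IsClopenPartition (X : Type*) [TopologicalSpace X] (P : Set (Set X)) : Prop :=
  (∀ S ∈ P, IsClopen S) ∧ (∀ S ∈ P, S.Nonempty) ∧
    (∀ S ∈ P, ∀ T ∈ P, S ≠ T → S ∩ T = ∅) ∧ ⋃₀ P = Set.univ

/-- A space is ultraparacompact if every open cover has a refinement that is a
partition of the space into clopen sets. -/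
def Ultraparacompact (X : Type*) [TopologicalSpace X] : Prop :=
  ∀ 𝒰 : Set (Set X), (∀ U ∈ 𝒰, IsOpen U) → ⋃₀ 𝒰 = Set.univ →
    ∃ P : Set (Set X), IsClopenPartition X P ∧ ∀ S ∈ P, ∃ U ∈ 𝒰, S ⊆ U

/-- A space is ultranormal if any two disjoint closed sets are separated by a clopen set. -/
def Ultranormal (X : Type*) [TopologicalSpace X] : Prop :=
  ∀ R S : Set X, IsClosed R → IsClosed S → Disjoint R S →
    ∃ C : Set X, IsClopen C ∧ R ⊆ C ∧ S ∩ C = ∅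

/-- A space is zero-dimensional if the clopen sets form a basis for the topology. -/
def ZeroDimensional (X : Type*) [TopologicalSpace X] : Prop :=
  TopologicalSpace.IsTopologicalBasis {s : Set X | IsClopen s}

/-- A normal P-space is ultranormal: the zero set of a Urysohn function is clopen. -/
lemma ultranormal_of_normal_pspace {X : Type*} [TopologicalSpace X] [NormalSpace X]
    (hP : ∀ s : ℕ → Set X, (∀ n, IsOpen (s n)) → IsOpen (⋂ n, s n)) :
    Ultranormal X := by
  intro R S hR hS hd
  obtain ⟨f, hf0, hf1, _⟩ := exists_continuous_zero_one_of_isClosed hR hS hd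
  refine ⟨f ⁻¹' {0}, ⟨?_, ?_⟩, ?_, ?_⟩
  · exact (isClosed_singleton (x := (0:ℝ))).preimage f.continuous
  · have key : f ⁻¹' {0} = ⋂ n : ℕ, f ⁻¹' (Metric.ball 0 (1 / (n + 1))) := by
      ext x
      simp only [Set.mem_preimage, Set.mem_singleton_iff, Set.mem_iInter, Metric.mem_ball,
        Real.dist_eq, sub_zero]
      constructor
      · intro h n
        rw [h, abs_zero]
        positivity
      · intro h
        by_contra hx
        have habs : 0 < |f x| := abs_pos.mpr hx
        obtain ⟨n, hn⟩ := exists_nat_one_div_lt habs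
        exact absurd (h n) (not_lt.mpr hn.le)
    rw [key]
    exact hP _ fun n => Metric.isOpen_ball.preimage f.continuous
  · intro x hx
    exact hf0 hx
  · ext x
    simp only [Set.mem_inter_iff, Set.mem_preimage, Set.mem_singleton_iff, Set.mem_empty_iff_false,
      iff_false, not_and]
    intro hx
    rw [hf1 hx]
    norm_num

/-- For a completely regular Hausdorff P-space (countable intersections of open sets
are open), paracompactness and ultraparacompactness coincide. -/
theorem pspace_paracompact_iff_ultraparacompact (X : Type*) [TopologicalSpace X]
    [T2Space X] [CompletelyRegularSpace X]
    (hP : ∀ s : ℕ → Set X, (∀ n, IsOpen (s n)) → IsOpen (⋂ n, s n)) :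
    ParacompactSpace X ↔ Ultraparacompact X := by
  constructor
  · intro hpc 𝒰 h𝒰o h𝒰u
    -- paracompact Hausdorff is normal
    have hun : Ultranormal X := ultranormal_of_normal_pspace hP
    -- a precise locally finite refinement of the cover
    have hu : ⋃ U : 𝒰, (U : Set X) = Set.univ := by
      rw [← Set.sUnion_eq_iUnion]; exact h𝒰u
    obtain ⟨v, vo, vu, vlf, vsub⟩ :=
      precise_refinement (fun U : 𝒰 => (U : Set X)) (fun U => h𝒰o U U.2) hu
    -- shrink to a cover whose closures sit inside the v's
    obtain ⟨w, hwu, hwo, hwc⟩ := exists_subset_iUnion_closure_subset isClosed_univ vo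
      (fun x _ => vlf.point_finite x) (by rw [vu])
    -- separate `closure (w i)` from `(v i)ᶜ` by clopen sets
    have hsep : ∀ i : 𝒰, ∃ C : Set X, IsClopen C ∧ closure (w i) ⊆ C ∧ C ⊆ v i := by
      intro i
      obtain ⟨C, hC, hRC, hSC⟩ := hun (closure (w i)) (v i)ᶜ isClosed_closure
        (vo i).isClosed_compl (Set.disjoint_compl_right_iff_subset.mpr (hwc i))
      refine ⟨C, hC, hRC, fun x hx => ?_⟩
      by_contra hxv
      exact Set.eq_empty_iff_forall_notMem.mp hSC x ⟨hxv, hx⟩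
    choose C hCclopen hCw hCv using hsep
    have hClf : LocallyFinite C := vlf.subset hCv
    have hCcov : ∀ x : X, ∃ i, x ∈ C i := by
      intro x
      have : x ∈ ⋃ i, w i := hwu (Set.mem_univ x)
      obtain ⟨i, hi⟩ := Set.mem_iUnion.mp this
      exact ⟨i, hCw i (subset_closure hi)⟩
    -- disjointify along a well-order
    let r : 𝒰 → 𝒰 → Prop := WellOrderingRel
    have hwo' : IsWellOrder 𝒰 r := WellOrderingRel.isWellOrder
    let B : 𝒰 → Set X := fun i => ⋃ j : {j : 𝒰 // r j i}, C j
    have hBclosed : ∀ i, IsClosed (B i) := fun i =>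
      (hClf.comp_injective Subtype.val_injective).isClosed_iUnion fun j => (hCclopen j).1
    have hBopen : ∀ i, IsOpen (B i) := fun i =>
      isOpen_iUnion fun j => (hCclopen j).2
    let D : 𝒰 → Set X := fun i => C i \ B i
    have hDclopen : ∀ i, IsClopen (D i) :=
      fun i => ⟨(hCclopen i).1.sdiff (hBopen i), (hCclopen i).2.sdiff (hBclosed i)⟩
    have hDsub : ∀ i, D i ⊆ C i := fun i => Set.diff_subset
    have hDcov : ∀ x : X, ∃ i, x ∈ D i := by
      intro x
      have hne : {i : 𝒰 | x ∈ C i}.Nonempty := hCcov x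
      obtain ⟨i₀, hi₀, hmin⟩ := hwo'.toIsWellFounded.wf.has_min _ hne
      refine ⟨i₀, hi₀, ?_⟩
      intro hx
      obtain ⟨⟨j, hji⟩, hxj⟩ := Set.mem_iUnion.mp hx
      exact hmin j hxj hji
    have hDdisj : ∀ i j : 𝒰, i ≠ j → D i ∩ D j = ∅ := by
      have key : ∀ i j : 𝒰, r i j → D i ∩ D j = ∅ := by
        intro i j hij
        apply Set.eq_empty_iff_forall_notMem.mpr
        rintro x ⟨hxi, hxj⟩
        exact hxj.2 (Set.mem_iUnion.mpr ⟨⟨i, hij⟩, hxi.1⟩)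
      intro i j hij
      rcases (show r i j ∨ i = j ∨ r j i from by
        by_contra hc; push_neg at hc; exact hc.2.1 (hwo'.trichotomous i j hc.1 hc.2.2)) with h | h | h
      · exact key i j h
      · exact absurd h hij
      · rw [Set.inter_comm]; exact key j i h
    refine ⟨D '' {i | (D i).Nonempty}, ⟨?_, ?_, ?_, ?_⟩, ?_⟩
    · rintro S ⟨i, _, rfl⟩; exact hDclopen i
    · rintro S ⟨i, hi, rfl⟩; exact hi
    · rintro S ⟨i, _, rfl⟩ T ⟨j, _, rfl⟩ hST
      exact hDdisj i j (fun h => hST (by rw [h]))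
    · apply Set.eq_univ_iff_forall.mpr
      intro x
      obtain ⟨i, hi⟩ := hDcov x
      exact ⟨D i, ⟨i, ⟨x, hi⟩, rfl⟩, hi⟩
    · rintro S ⟨i, _, rfl⟩
      exact ⟨(i : Set X), i.2, (hDsub i).trans ((hCv i).trans (vsub i))⟩
  · intro hU
    constructor
    intro ι u uo uc
    obtain ⟨P, ⟨hPclopen, _, hPdisj, hPcov⟩, hPref⟩ := hU (Set.range u)
      (by rintro U ⟨i, rfl⟩; exact uo i) (by rwa [Set.sUnion_range])
    have hmem : ∀ x : X, ∃ S : P, x ∈ (S : Set X) := by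
      intro x
      have : x ∈ ⋃₀ P := hPcov ▸ Set.mem_univ x
      obtain ⟨S, hS, hx⟩ := this
      exact ⟨⟨S, hS⟩, hx⟩
    refine ⟨P, fun S => (S : Set X), fun S => (hPclopen S S.2).2, ?_, ?_, ?_⟩
    · apply Set.eq_univ_iff_forall.mpr
      intro x
      obtain ⟨S, hS⟩ := hmem x
      exact Set.mem_iUnion.mpr ⟨S, hS⟩
    · intro x
      obtain ⟨S₀, hS₀⟩ := hmem x
      refine ⟨S₀, (hPclopen S₀ S₀.2).2.mem_nhds hS₀, ?_⟩
      apply Set.Finite.subset (Set.finite_singleton S₀)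
      rintro T ⟨y, hyT, hyS₀⟩
      simp only [Set.mem_singleton_iff]
      by_contra hne
      have : (T : Set X) ∩ (S₀ : Set X) = ∅ :=
        hPdisj T T.2 S₀ S₀.2 (fun h => hne (Subtype.ext h))
      exact absurd this (Set.nonempty_iff_ne_empty.mp ⟨y, hyT, hyS₀⟩)
    · intro S
      obtain ⟨U, ⟨i, rfl⟩, hSU⟩ := hPref S S.2
      exact ⟨i, hSU⟩
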